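/- Let F(t) = t + 1 − e^{−t} for t ≥ 0 and J(w) = ∑_{i=1}^3 F(|w_i|) on ℝ³. Let x, y > 0, z = x + y, and let ν = ℝ·(x, y, z) be the one-dimensional subspace of ℝ³ spanned by (x, y, z). Then for every d > 0 there exist w ∈ ν with w ≠ 0, η ∈ ℝ³ with ‖η‖ < d‖w‖ (Euclidean norms), and T ⊆ {1,2,3} with |T| ≤ 1, such that J((w+η)_T) ≥ J((w+η)_{T^c}). (Hence the robust null space condition fails for every parameter d > 0, so this null space satisfies the exact recovery condition but not the robust recovery condition.) -/

import Mathlib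

noncomputable section

/-- The sparseness measure `F(t) = t + 1 − e^{−t}` from Counter-example 1. -/
def F7 (t : ℝ) : ℝ := t + 1 - Real.exp (-t)

/-- The restricted cost `J(x_T) = ∑ i ∈ T, F |x i|`. -/
def costJT {n : ℕ} (F : ℝ → ℝ) (T : Finset (Fin n)) (x : EuclideanSpace ℝ (Fin n)) : ℝ :=
  ∑ i ∈ T, F |x i|

lemma key_ineq (a b ε : ℝ) (ha : 0 ≤ a) (hb : 0 ≤ b) (hab : a * b ≤ ε) :
    F7 a + F7 b ≤ F7 (a + b + ε) := by
  unfold F7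
  have h1 : Real.exp (-(a + b + ε)) ≤ Real.exp (-a) * Real.exp (-b) := by
    rw [← Real.exp_add]
    exact Real.exp_le_exp.mpr (by linarith [le_trans (mul_nonneg ha hb) hab])
  have h2 : 1 - Real.exp (-a) ≤ a := by linarith [Real.add_one_le_exp (-a)]
  have h3 : 1 - Real.exp (-b) ≤ b := by linarith [Real.add_one_le_exp (-b)]
  have h4 : Real.exp (-a) ≤ 1 := Real.exp_le_one_iff.mpr (by linarith)
  have h5 : Real.exp (-b) ≤ 1 := Real.exp_le_one_iff.mpr (by linarith)
  nlinarith [mul_nonneg (sub_nonneg.mpr h4) (sub_nonneg.mpr h5),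
    mul_le_mul h2 h3 (by linarith) ha]

theorem stmt8 (x y : ℝ) (hx : 0 < x) (hy : 0 < y) (d : ℝ) (hd : 0 < d) :
    ∃ w : EuclideanSpace ℝ (Fin 3),
      w ∈ Submodule.span ℝ {(WithLp.toLp 2 ![x, y, x + y] : EuclideanSpace ℝ (Fin 3))} ∧ w ≠ 0 ∧
      ∃ η : EuclideanSpace ℝ (Fin 3), ‖η‖ < d * ‖w‖ ∧
        ∃ T : Finset (Fin 3), T.card ≤ 1 ∧
          costJT F7 Tᶜ (w + η) ≤ costJT F7 T (w + η) := by
  set v : EuclideanSpace ℝ (Fin 3) := WithLp.toLp 2 ![x, y, x + y] with hv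
  have hvne : v ≠ 0 := by
    intro h
    have : v 0 = 0 := by rw [h]; rfl
    simp [hv] at this
    exact absurd this (ne_of_gt hx)
  have hvnorm : 0 < ‖v‖ := norm_pos_iff.mpr hvne
  set t : ℝ := d * ‖v‖ / (2 * x * y) with ht
  have htpos : 0 < t := by positivity
  set ε : ℝ := t * t * x * y with hε
  have hεpos : 0 < ε := by positivity
  refine ⟨t • v, Submodule.smul_mem _ t (Submodule.mem_span_singleton_self v),
    smul_ne_zero (ne_of_gt htpos) hvne, EuclideanSpace.single 2 ε, ?_, {2}, by decide, ?_⟩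
  · rw [EuclideanSpace.norm_single, norm_smul, Real.norm_eq_abs, Real.norm_eq_abs,
      abs_of_pos hεpos, abs_of_pos htpos]
    have : ε = (d * t * ‖v‖) / 2 := by
      rw [hε, ht]
      field_simp [hx.ne', hy.ne']
    rw [this]
    nlinarith
  · have hTc : ({2} : Finset (Fin 3))ᶜ = {0, 1} := by decide
    rw [hTc]
    have h0 : ((t • v + EuclideanSpace.single 2 ε : EuclideanSpace ℝ (Fin 3)) 0) = t * x := by
      simp [hv, EuclideanSpace.single_apply]
    have h1 : ((t • v + EuclideanSpace.single 2 ε : EuclideanSpace ℝ (Fin 3)) 1) = t * y := by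
      simp [hv, EuclideanSpace.single_apply]
    have h2 : ((t • v + EuclideanSpace.single 2 ε : EuclideanSpace ℝ (Fin 3)) 2) = t * (x + y) + ε := by
      simp [hv, EuclideanSpace.single_apply]
    simp only [costJT]
    rw [Finset.sum_pair (by decide), Finset.sum_singleton, h0, h1, h2]
    rw [abs_of_pos (by positivity), abs_of_pos (by positivity),
      abs_of_pos (by positivity)]
    have := key_ineq (t * x) (t * y) ε (le_of_lt (by positivity)) (le_of_lt (by positivity))
      (by rw [hε]; ring_nf; nlinarith)
    calc F7 (t * x) + F7 (t * y) ≤ F7 (t * x + t * y + ε) := this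
      _ = F7 (t * (x + y) + ε) := by ring_nf
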